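/- If G is a finite simple König-Egerváry graph, i.e. its matching number equals its covering number, then the number of maximal independent sets of G is at most 2^ν(G), where ν(G) is the matching number of G. -/

import Mathlib

variable {V : Type*}

/-- `S` is an independent set of `G`: no two vertices of `S` are adjacent. -/
def IsIndepSet (G : SimpleGraph V) (S : Set V) : Prop :=
  ∀ ⦃u v : V⦄, u ∈ S → v ∈ S → ¬ G.Adj u v

/-- `S` is a maximal independent set of `G`. -/
def IsMaxIndepSet (G : SimpleGraph V) (S : Set V) : Prop :=
  IsIndepSet G S ∧ ∀ T : Set V, IsIndepSet G T → S ⊆ T → S = T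

/-- `m(G)`: the number of maximal independent sets of `G`. -/
noncomputable def numMaxIndep (G : SimpleGraph V) : ℕ :=
  {S : Set V | IsMaxIndepSet G S}.ncard

/-- `C` is a vertex cover of `G`: every edge has at least one endpoint in `C`. -/
def IsVertexCover (G : SimpleGraph V) (C : Set V) : Prop :=
  ∀ ⦃u v : V⦄, G.Adj u v → u ∈ C ∨ v ∈ C

/-- `β(G)`: the minimum size of a vertex cover of `G`. -/
noncomputable def coverNumber (G : SimpleGraph V) : ℕ :=
  sInf {n : ℕ | ∃ C : Set V, IsVertexCover G C ∧ C.ncard = n}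

/-- `M` is a matching of `G`: a set of edges of `G`, pairwise sharing no vertex. -/
def IsMatching (G : SimpleGraph V) (M : Set (Sym2 V)) : Prop :=
  M ⊆ G.edgeSet ∧ ∀ e ∈ M, ∀ f ∈ M, e ≠ f → ∀ v : V, v ∈ e → v ∉ f

/-- `M` is an induced matching of `G`: a matching such that no two distinct
edges of `M` are joined by an edge of `G`. -/
def IsInducedMatching (G : SimpleGraph V) (M : Set (Sym2 V)) : Prop :=
  IsMatching G M ∧ ∀ e ∈ M, ∀ f ∈ M, e ≠ f → ∀ u v : V, u ∈ e → v ∈ f → ¬ G.Adj u v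

/-- `ν(G)`: the maximum size of a matching of `G`. -/
noncomputable def matchingNumber (G : SimpleGraph V) : ℕ :=
  sSup {n : ℕ | ∃ M : Set (Sym2 V), IsMatching G M ∧ M.ncard = n}

/-- `ν₀(G)`: the maximum size of an induced matching of `G`. -/
noncomputable def inducedMatchingNumber (G : SimpleGraph V) : ℕ :=
  sSup {n : ℕ | ∃ M : Set (Sym2 V), IsInducedMatching G M ∧ M.ncard = n}

/-- `G` is bipartite: the vertices split into two sides with every edge crossing. -/
def IsBipartite (G : SimpleGraph V) : Prop :=
  ∃ A : Set V, ∀ ⦃u v : V⦄, G.Adj u v → (u ∈ A ↔ v ∉ A)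

/-- Half of injectivity: if two maximal independent sets agree on a cover,
one contains the other. -/
lemma subset_of_inter_cover_eq (G : SimpleGraph V) {C S S' : Set V}
    (hC : IsVertexCover G C) (hS : IsMaxIndepSet G S) (hS' : IsMaxIndepSet G S')
    (h : S ∩ C = S' ∩ C) : S ⊆ S' := by
  intro v hv
  by_cases hvC : v ∈ C
  · have : v ∈ S' ∩ C := h ▸ ⟨hv, hvC⟩
    exact this.1
  · have hno : ∀ w ∈ S', ¬ G.Adj v w := by
      intro w hw hadj
      have hwC : w ∈ C := (hC hadj).resolve_left hvC
      have hwS : w ∈ S := (h ▸ (⟨hw, hwC⟩ : w ∈ S' ∩ C) : w ∈ S ∩ C).1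
      exact hS.1 hv hwS hadj
    have hindep : IsIndepSet G (insert v S') := by
      intro a b ha hb hadj
      rcases ha with rfl | ha
      · rcases hb with rfl | hb
        · exact G.irrefl hadj
        · exact hno b hb hadj
      · rcases hb with rfl | hb
        · exact hno a ha (G.adj_symm hadj)
        · exact hS'.1 ha hb hadj
    have := hS'.2 _ hindep (Set.subset_insert v S')
    rw [this]
    exact Set.mem_insert v S'

/-- If `G` is a König-Egerváry graph then `m(G) ≤ 2 ^ ν(G)`. -/
theorem numMaxIndep_le_two_pow_matchingNumber_of_koenig [Fintype V] (G : SimpleGraph V)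
    (hKE : coverNumber G = matchingNumber G) :
    numMaxIndep G ≤ 2 ^ matchingNumber G := by
  classical
  have hmem : coverNumber G ∈ {n : ℕ | ∃ C : Set V, IsVertexCover G C ∧ C.ncard = n} :=
    Nat.sInf_mem ⟨(Set.univ : Set V).ncard, Set.univ,
      fun u v _ => Or.inl (Set.mem_univ u), rfl⟩
  obtain ⟨C, hC, hCcard⟩ := hmem
  rw [← hKE, ← hCcard]
  have hinj : Set.InjOn (fun S => S ∩ C) {S : Set V | IsMaxIndepSet G S} := by
    intro S hS S' hS' h
    exact Set.Subset.antisymm (subset_of_inter_cover_eq G hC hS hS' h)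
      (subset_of_inter_cover_eq G hC hS' hS h.symm)
  have hsub : (fun S => S ∩ C) '' {S : Set V | IsMaxIndepSet G S} ⊆ {T : Set V | T ⊆ C} := by
    rintro _ ⟨S, _, rfl⟩
    exact Set.inter_subset_right
  have hfin : {T : Set V | T ⊆ C}.Finite := Set.toFinite _
  have hpow : {T : Set V | T ⊆ C}.ncard = 2 ^ C.ncard := by
    have e : ↥({T : Set V | T ⊆ C}) ≃ Set ↥C := Equiv.Set.powerset C
    rw [← Nat.card_coe_set_eq, Nat.card_congr e, Nat.card_eq_fintype_card,
      Fintype.card_set, ← Nat.card_eq_fintype_card, Nat.card_coe_set_eq]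
  calc numMaxIndep G = ((fun S => S ∩ C) '' {S : Set V | IsMaxIndepSet G S}).ncard :=
        (Set.ncard_image_of_injOn hinj).symm
    _ ≤ {T : Set V | T ⊆ C}.ncard := Set.ncard_le_ncard hsub hfin
    _ = 2 ^ C.ncard := hpow
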